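/- arXiv:2503.17256 — 2 statements merged into one kernel-verified Lean document; each statement's English description precedes it below -/
import Mathlib

section
/- Fix an outcome π ∈ S_{m,n} of the (k,ℓ)-pullback parking process and i ∈ [n] with π_i > 0. If car π_i parked in spot i by moving forward from an occupied preferred spot to its left (after failing to find an empty spot among the k spots behind its preference), then the number of possible preferences for car π_i equals: 0 if Left(π_i) = 0; min(i-1, ℓ) if Left(π_i) = i-1 > 0; and max(min(Left(π_i) - k, ℓ), 0) if 0 < Left(π_i) < i-1. Here Left(π_i) is the length of the longest consecutive subsequence π_y, ..., π_{i-1} with 0 < π_t < π_i for all y ≤ t ≤ i-1. -/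
/-- Try to park a car with preference `a` under the `(k,l)`-pullback rule on a
street with spots `1,…,n`, where `occ` is the set of occupied spots.  The car
parks at `a` if it is free; otherwise it checks `a-1,…,a-k` (not before spot 1)
and parks in the first free spot found; failing that it checks `a+1,…,a+l`
(not beyond spot `n`).  Returns the spot where the car parks, if any. -/
def pullTry (k l n : ℕ) (occ : Finset ℕ) (a : ℕ) : Option ℕ :=
  if a ∉ occ then some a
  else
    match ((List.range k).map (fun j => a - (j + 1))).find?
        (fun s => decide (1 ≤ s ∧ s ∉ occ)) with
    | some s => some s
    | none =>
        ((List.range l).map (fun j => a + (j + 1))).find?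
          (fun s => decide (s ≤ n ∧ s ∉ occ))

/-- Park a list of cars sequentially by the `(k,l)`-pullback rule, returning the
list of spots where they park (in order) if all of them park. -/
def pullRunAux (k l n : ℕ) : List ℕ → Finset ℕ → Option (List ℕ)
  | [], _ => some []
  | a :: rest, occ =>
    match pullTry k l n occ a with
    | none => none
    | some s => (pullRunAux k l n rest (insert s occ)).map (fun t => s :: t)

def pullRun (k l n : ℕ) (prefs : List ℕ) : Option (List ℕ) :=
  pullRunAux k l n prefs ∅

/-- The `k`-Naples rule: back up at most `k` spots, then drive forward all the
way to spot `n`. -/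
def naplesTry (k n : ℕ) (occ : Finset ℕ) (a : ℕ) : Option ℕ :=
  if a ∉ occ then some a
  else
    match ((List.range k).map (fun j => a - (j + 1))).find?
        (fun s => decide (1 ≤ s ∧ s ∉ occ)) with
    | some s => some s
    | none => (List.range' (a + 1) (n - a)).find? (fun s => decide (s ∉ occ))

def naplesRunAux (k n : ℕ) : List ℕ → Finset ℕ → Option (List ℕ)
  | [], _ => some []
  | a :: rest, occ =>
    match naplesTry k n occ a with
    | none => none
    | some s => (naplesRunAux k n rest (insert s occ)).map (fun t => s :: t)

def naplesRun (k n : ℕ) (prefs : List ℕ) : Option (List ℕ) :=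
  naplesRunAux k n prefs ∅

/-- The classical rule: park in the first free spot among `a, a+1, …, n`. -/
def classicalTry (n : ℕ) (occ : Finset ℕ) (a : ℕ) : Option ℕ :=
  (List.range' a (n + 1 - a)).find? (fun s => decide (s ∉ occ))

def classicalRunAux (n : ℕ) : List ℕ → Finset ℕ → Option (List ℕ)
  | [], _ => some []
  | a :: rest, occ =>
    match classicalTry n occ a with
    | none => none
    | some s => (classicalRunAux n rest (insert s occ)).map (fun t => s :: t)

def classicalRun (n : ℕ) (prefs : List ℕ) : Option (List ℕ) :=
  classicalRunAux n prefs ∅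

/-- The list of (1-based) preferences encoded by a tuple `α ∈ [n]^m`. -/
def prefList {m n : ℕ} (α : Fin m → Fin n) : List ℕ :=
  List.ofFn (fun i => (α i : ℕ) + 1)

/-- The finset of `(k,l)`-pullback `(m,n)`-parking functions. -/
def pullPFs (k l m n : ℕ) : Finset (Fin m → Fin n) :=
  Finset.univ.filter (fun α => (pullRun k l n (prefList α)).isSome = true)

/-- The finset of `k`-Naples `(m,n)`-parking functions. -/
def naplesPFs (k m n : ℕ) : Finset (Fin m → Fin n) :=
  Finset.univ.filter (fun α => (naplesRun k n (prefList α)).isSome = true)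

/-- The finset of classical `(m,n)`-parking functions. -/
def classicalPFs (m n : ℕ) : Finset (Fin m → Fin n) :=
  Finset.univ.filter (fun α => (classicalRun n (prefList α)).isSome = true)

/-- `outcomeOf spots i = j+1` if car `j+1` (0-indexed `j`) parked in spot `i`,
and `0` if spot `i` is vacant.  Here `spots` lists the spots of cars `1,…,m`. -/
def outcomeOf (spots : List ℕ) (i : ℕ) : ℕ :=
  match spots.findIdx? (· == i) with
  | some j => j + 1
  | none => 0

/-- The outcome of a `(k,l)`-pullback parking function, as a function sending
the (0-based) spot index `i` to the label of the car parked in spot `i+1`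
(or `0` if vacant). -/
def pullOutcome (k l n : ℕ) {m : ℕ} (α : Fin m → Fin n) : Fin n → ℕ :=
  fun i => outcomeOf ((pullRun k l n (prefList α)).getD []) ((i : ℕ) + 1)

/-- The outcome of a classical parking function. -/
def classicalOutcome (n : ℕ) {m : ℕ} (α : Fin m → Fin n) : Fin n → ℕ :=
  fun i => outcomeOf ((classicalRun n (prefList α)).getD []) ((i : ℕ) + 1)

/-- `S_{m,n}`: arrangements of the multiset `{0,…,0} ∪ [m]` with `n - m`
zeros, as functions on the `n` positions. -/
def SmnSet (m n : ℕ) : Finset (Fin n → ℕ) :=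
  ((Finset.univ : Finset (Fin n → Fin (m + 1))).image
      (fun π i => (π i : ℕ))).filter
    (fun π => Finset.univ.val.map π =
      Multiset.replicate (n - m) 0 + (Multiset.range m).map (· + 1))

/-- Read an arrangement `π` at the 1-based position `t` (zero outside `[1,n]`). -/
def at1 {n : ℕ} (π : Fin n → ℕ) (t : ℕ) : ℕ :=
  if h : 1 ≤ t ∧ t ≤ n then π ⟨t - 1, by omega⟩ else 0

/-- The spots occupied by the cars with labels `< c` (those that parked before
car `c`), as read off from the outcome `π`. -/
def occBefore {n : ℕ} (π : Fin n → ℕ) (c : ℕ) : Finset ℕ :=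
  (Finset.Icc 1 n).filter (fun s => 0 < at1 π s ∧ at1 π s < c)

/-- `Right(π_i)`: the length of the longest consecutive run
`π_{i+1}, …, π_{i+x}` with `0 < π_t < π_i` throughout. -/
def rightRun {n : ℕ} (π : Fin n → ℕ) (i : ℕ) : ℕ :=
  Nat.findGreatest
    (fun x => ∀ t ∈ Finset.Icc (i + 1) (i + x), 0 < at1 π t ∧ at1 π t < at1 π i) n

/-- `Left(π_i)`: the length of the longest consecutive run
`π_{i-x}, …, π_{i-1}` with `0 < π_t < π_i` throughout. -/
noncomputable def leftRun {n : ℕ} (π : Fin n → ℕ) (i : ℕ) : ℕ :=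
  @Nat.findGreatest
    (fun x => ∀ t ∈ Finset.Icc (i - x) (i - 1), 0 < at1 π t ∧ at1 π t < at1 π i)
    (fun _ => Classical.propDecidable _) n

/-- `B(π_i) = min(Right(π_i), k)`. -/
def Bval (k : ℕ) {n : ℕ} (π : Fin n → ℕ) (i : ℕ) : ℕ :=
  min (rightRun π i) k

/-- `F(π_i)`, defined by cases: `0` if `Left(π_i) = 0`; `min(i-1, l)` if
`Left(π_i) = i-1 > 0`; and `max(min(Left(π_i) - k, l), 0)` (truncated
subtraction) if `0 < Left(π_i) < i-1`. -/
noncomputable def Fval (k l : ℕ) {n : ℕ} (π : Fin n → ℕ) (i : ℕ) : ℕ :=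
  if leftRun π i = 0 then 0
  else if leftRun π i = i - 1 then min (i - 1) l
  else min (leftRun π i - k) l

/-- `L(σ_i)`: the length of the longest consecutive run of `σ` ending at
position `i` all of whose entries are at most `σ_i`. -/
noncomputable def Lrun {n : ℕ} (σ : Fin n → ℕ) (i : ℕ) : ℕ :=
  @Nat.findGreatest
    (fun x => ∀ t ∈ Finset.Icc (i - x + 1) i, at1 σ t ≤ at1 σ i)
    (fun _ => Classical.propDecidable _) n

lemma find?_range'_some (p : ℕ → Bool) :
    ∀ (len s i : ℕ), ((List.range' s len).find? p = some i ↔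
      s ≤ i ∧ i < s + len ∧ p i = true ∧ ∀ t, s ≤ t → t < i → p t = false) := by
  intro len
  induction len with
  | zero => intro s i; simp; omega
  | succ m ih =>
    intro s i
    rw [List.range'_succ, List.find?_cons]
    cases hps : p s with
    | true =>
      simp only [Option.some.injEq]
      constructor
      · rintro rfl; exact ⟨le_rfl, by omega, hps, fun t h1 h2 => by omega⟩
      · rintro ⟨h1, h2, h3, h4⟩
        by_contra hne
        have := h4 s le_rfl (by omega)
        rw [hps] at this; cases this
    | false =>
      rw [ih]
      constructor
      · rintro ⟨h1, h2, h3, h4⟩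
        refine ⟨by omega, by omega, h3, fun t ht1 ht2 => ?_⟩
        rcases eq_or_lt_of_le ht1 with rfl | h
        · exact hps
        · exact h4 t h ht2
      · rintro ⟨h1, h2, h3, h4⟩
        have hsi : s ≠ i := by rintro rfl; rw [h3] at hps; cases hps
        exact ⟨by omega, by omega, h3, fun t ht1 ht2 => h4 t (by omega) ht2⟩

lemma map_range_add (a l : ℕ) :
    (List.range l).map (fun j => a + (j + 1)) = List.range' (a + 1) l := by
  rw [List.range'_eq_map_range]
  congr 1; funext j; omega

lemma pullTry_some_iff (k l n : ℕ) (occ : Finset ℕ) (a i : ℕ)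
    (ha1 : 1 ≤ a) (hai : a < i) (hin : i ≤ n) (hi : i ∉ occ) :
    pullTry k l n occ a = some i ↔
      (i ≤ a + l ∧ a ∈ occ ∧ ∀ t, a - k ≤ t → 1 ≤ t → t < i → t ∈ occ) := by
  unfold pullTry
  by_cases ha : a ∈ occ
  · rw [if_neg (by simpa using ha)]
    cases hb : ((List.range k).map (fun j => a - (j + 1))).find?
        (fun s => decide (1 ≤ s ∧ s ∉ occ)) with
    | some s =>
      have hps := List.find?_some hb
      have hmem := List.mem_of_find?_eq_some hb
      simp only [List.mem_map, List.mem_range] at hmem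
      obtain ⟨j, hj, rfl⟩ := hmem
      simp only [decide_eq_true_eq] at hps
      constructor
      · intro h
        simp only [Option.some.injEq] at h
        omega
      · rintro ⟨-, -, h3⟩
        exact absurd (h3 (a - (j + 1)) (by omega) hps.1 (by omega)) hps.2
    | none =>
      rw [List.find?_eq_none] at hb
      simp only [List.mem_map, List.mem_range, decide_eq_true_eq, not_and, not_not,
        and_imp, forall_exists_index] at hb
      have hback : ∀ j < k, 1 ≤ a - (j + 1) → a - (j + 1) ∈ occ := by
        intro j hj h1
        exact hb (a - (j+1)) j hj rfl h1
      rw [map_range_add, find?_range'_some]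
      simp only [decide_eq_true_eq, decide_eq_false_iff_not, not_and, not_not]
      constructor
      · rintro ⟨h1, h2, h3, h4⟩
        refine ⟨by omega, ha, fun t ht1 ht2 ht3 => ?_⟩
        rcases lt_trichotomy t a with h | rfl | h
        · have : t = a - ((a - t - 1) + 1) := by omega
          rw [this]; exact hback _ (by omega) (by omega)
        · exact ha
        · exact h4 t (by omega) ht3 (by omega)
      · rintro ⟨h1, h2, h3⟩
        refine ⟨by omega, by omega, ⟨hin, hi⟩, fun t ht1 ht2 => fun _ => ?_⟩
        exact h3 t (by omega) (by omega) ht2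
  · rw [if_pos (by simpa using ha)]
    simp only [Option.some.injEq]
    constructor
    · omega
    · rintro ⟨-, h, -⟩; exact absurd h ha

theorem stmt12 (k l m n : ℕ) (hm : m ≤ n) (π : Fin n → ℕ)
    (hπ : π ∈ SmnSet m n) (i : ℕ) (hi1 : 1 ≤ i) (hin : i ≤ n)
    (hpos : 0 < at1 π i) :
    ((Finset.Icc 1 n).filter
        (fun a => a < i ∧ pullTry k l n (occBefore π (at1 π i)) a = some i)).card
      = if leftRun π i = 0 then 0
        else if leftRun π i = i - 1 then min (i - 1) l
        else min (leftRun π i - k) l := by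
  classical
  set occ := occBefore π (at1 π i) with hoccdef
  have mem_occ : ∀ t, t ∈ occ ↔ (1 ≤ t ∧ t ≤ n ∧ 0 < at1 π t ∧ at1 π t < at1 π i) := by
    intro t
    simp [hoccdef, occBefore, Finset.mem_filter, Finset.mem_Icc, and_assoc]
  have hialt : i ∉ occ := by
    rw [mem_occ]; push_neg; intro _ _ _; exact le_rfl
  have hP0 : ∀ t ∈ Finset.Icc (i - 0) (i - 1), 0 < at1 π t ∧ at1 π t < at1 π i := by
    intro t ht; rw [Finset.mem_Icc] at ht; omega
  have hPL : ∀ t ∈ Finset.Icc (i - leftRun π i) (i - 1),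
      0 < at1 π t ∧ at1 π t < at1 π i := by
    exact @Nat.findGreatest_spec 0
      (fun x => ∀ t ∈ Finset.Icc (i - x) (i - 1), 0 < at1 π t ∧ at1 π t < at1 π i)
      (fun _ => Classical.propDecidable _) n (Nat.zero_le n) hP0
  have hgreat : ∀ x, leftRun π i < x → x ≤ n →
      ¬ (∀ t ∈ Finset.Icc (i - x) (i - 1), 0 < at1 π t ∧ at1 π t < at1 π i) := by
    intro x h1 h2
    exact @Nat.findGreatest_is_greatest x
      (fun x => ∀ t ∈ Finset.Icc (i - x) (i - 1), 0 < at1 π t ∧ at1 π t < at1 π i)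
      (fun _ => Classical.propDecidable _) n h1 h2
  have hLle : leftRun π i ≤ i - 1 := by
    by_contra h
    have h0 : (0:ℕ) ∈ Finset.Icc (i - leftRun π i) (i - 1) := by
      rw [Finset.mem_Icc]; omega
    have := (hPL 0 h0).1
    rw [show at1 π 0 = 0 from by simp [at1]] at this
    omega
  have hrun : ∀ t, i - leftRun π i ≤ t → t ≤ i - 1 → t ∈ occ := by
    intro t h1 h2
    rw [mem_occ]
    have := hPL t (by rw [Finset.mem_Icc]; omega)
    exact ⟨by omega, by omega, this.1, this.2⟩
  have hmaxv : leftRun π i < i - 1 → (i - leftRun π i - 1) ∉ occ := by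
    intro hL hmem
    apply hgreat (leftRun π i + 1) (by omega) (by omega)
    intro t ht
    rw [Finset.mem_Icc] at ht
    rcases eq_or_lt_of_le ht.1 with heq | hlt
    · have ht' : t = i - leftRun π i - 1 := by omega
      rw [mem_occ] at hmem
      rw [ht']
      exact ⟨hmem.2.2.1, hmem.2.2.2⟩
    · have := hrun t (by omega) ht.2
      rw [mem_occ] at this
      exact ⟨this.2.2.1, this.2.2.2⟩
  have hchar : ∀ a, (1 ≤ a ∧ a ≤ n ∧ a < i ∧ pullTry k l n occ a = some i) ↔
      (i ≤ a + l ∧ i - leftRun π i ≤ a ∧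
        (leftRun π i < i - 1 → i - leftRun π i + k ≤ a) ∧ a ≤ i - 1) := by
    intro a
    constructor
    · rintro ⟨ha1, han, hai, hp⟩
      rw [pullTry_some_iff k l n occ a i ha1 hai hin hialt] at hp
      obtain ⟨h1, h2, h3⟩ := hp
      refine ⟨h1, ?_, ?_, by omega⟩
      · by_contra hcon
        push_neg at hcon
        have hd := hmaxv (by omega)
        exact hd (h3 (i - leftRun π i - 1) (by omega) (by omega) (by omega))
      · intro hL
        by_contra hcon
        push_neg at hcon
        have hd := hmaxv hL
        exact hd (h3 (i - leftRun π i - 1) (by omega) (by omega) (by omega))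
    · rintro ⟨h1, h2, h3, h4⟩
      have ha1 : 1 ≤ a := by omega
      have hai : a < i := by omega
      refine ⟨ha1, by omega, hai, ?_⟩
      rw [pullTry_some_iff k l n occ a i ha1 hai hin hialt]
      refine ⟨h1, hrun a h2 (by omega), fun t ht1 ht2 ht3 => ?_⟩
      apply hrun t ?_ (by omega)
      by_contra hcon
      push_neg at hcon
      rcases lt_or_ge (leftRun π i) (i - 1) with hc1 | hc2
      · have := h3 hc1; omega
      · omega
  have hIcc : ∀ lo : ℕ,
      (∀ a, (i ≤ a + l ∧ i - leftRun π i ≤ a ∧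
        (leftRun π i < i - 1 → i - leftRun π i + k ≤ a) ∧ a ≤ i - 1) ↔
        (lo ≤ a ∧ a ≤ i - 1)) →
      ((Finset.Icc 1 n).filter
        (fun a => a < i ∧ pullTry k l n occ a = some i)).card = i - lo := by
    intro lo hlo
    have : (Finset.Icc 1 n).filter
        (fun a => a < i ∧ pullTry k l n occ a = some i) = Finset.Icc lo (i - 1) := by
      ext a
      simp only [Finset.mem_filter, Finset.mem_Icc]
      constructor
      · rintro ⟨⟨x1, x2⟩, x3, x4⟩
        exact (hlo a).mp ((hchar a).mp ⟨x1, x2, x3, x4⟩)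
      · intro hb
        have := (hchar a).mpr ((hlo a).mpr hb)
        exact ⟨⟨this.1, this.2.1⟩, this.2.2.1, this.2.2.2⟩
    rw [this, Nat.card_Icc]
    omega
  by_cases hL0 : leftRun π i = 0
  · rw [if_pos hL0]
    rw [hIcc i (fun a => by constructor <;> intro <;> omega)]
    omega
  · rw [if_neg hL0]
    by_cases hLi : leftRun π i = i - 1
    · rw [if_pos hLi]
      rw [hIcc (max 1 (i - l)) (fun a => by constructor <;> intro <;> omega)]
      omega
    · rw [if_neg hLi]
      rw [hIcc (max (i - leftRun π i + k) (i - l))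
        (fun a => by constructor <;> intro <;> omega)]
      omega
end

section
/- The number of (k,ℓ)-pullback (m,n)-parking functions with outcome π ∈ S_{m,n} equals the product over i = 1 to n of (B(π_i) + F(π_i) + 1), where for π_i = 0 the factor is 1 (B(0)=F(0)=0). -/
/-! ### auxiliary lemmas -/

lemma find?_map_range_some (k : ℕ) (f : ℕ → ℕ) (q : ℕ → Bool) (x : ℕ) :
    ((List.range k).map f).find? q = some x ↔
      ∃ j, j < k ∧ f j = x ∧ q x = true ∧ ∀ j' < j, q (f j') = false := by
  induction k generalizing f with
  | zero => simp
  | succ k ih =>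
    rw [List.range_succ_eq_map, List.map_cons, List.map_map]
    by_cases h0 : q (f 0)
    · rw [List.find?_cons_of_pos h0]
      constructor
      · rintro h
        injection h with h; subst h
        exact ⟨0, by omega, rfl, h0, by omega⟩
      · rintro ⟨j, hj, rfl, hq, hmin⟩
        cases j with
        | zero => rfl
        | succ j => exact absurd h0 (by simpa using hmin 0 (by omega))
    · rw [List.find?_cons_of_neg h0]
      rw [show (f ∘ Nat.succ) = (fun j => f (j+1)) from rfl] at *
      rw [ih]
      constructor
      · rintro ⟨j, hj, hfj, hq, hmin⟩
        exact ⟨j+1, by omega, hfj, hq, fun j' hj' => by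
          cases j' with
          | zero => simpa using h0
          | succ j' => exact hmin _ (by omega)⟩
      · rintro ⟨j, hj, hfj, hq, hmin⟩
        cases j with
        | zero => exact absurd hq (by rw [hfj] at h0; simpa using h0)
        | succ j => exact ⟨j, by omega, hfj, hq, fun j' h => hmin (j'+1) (by omega)⟩

lemma find?_map_range_none (k : ℕ) (f : ℕ → ℕ) (q : ℕ → Bool) :
    ((List.range k).map f).find? q = none ↔ ∀ j < k, q (f j) = false := by
  rw [List.find?_eq_none]
  constructor
  · intro h j hj
    have := h (f j) (List.mem_map_of_mem (List.mem_range.mpr hj))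
    simpa using this
  · intro h x hx
    obtain ⟨j, hj, rfl⟩ := List.mem_map.mp hx
    simpa using h j (List.mem_range.mp hj)

lemma pullTry_eq_some_iff (k l n : ℕ) (occ : Finset ℕ) (i R L F : ℕ)
    (hi1 : 1 ≤ i) (hin : i ≤ n) (hio : i ∉ occ)
    (hoccb : ∀ s ∈ occ, 1 ≤ s)
    (hR : ∀ j, 1 ≤ j → j ≤ R → i + j ∈ occ)
    (hR' : i + R + 1 ∉ occ)
    (hL : ∀ j, 1 ≤ j → j ≤ L → i - j ∈ occ)
    (hL' : L < i - 1 → i - L - 1 ∉ occ)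
    (hLi : L ≤ i - 1)
    (hF : F = if L = 0 then 0 else if L = i - 1 then min (i-1) l else min (L - k) l)
    (a : ℕ) :
    pullTry k l n occ a = some i ↔ (i - F ≤ a ∧ a ≤ i + min R k) := by
  have hFL : F ≤ L := by subst hF; split_ifs <;> omega
  have hFl : F = 0 ∨ F ≤ l := by subst hF; split_ifs <;> omega
  constructor
  · intro h
    rw [pullTry] at h
    split_ifs at h with hmem
    swap
    · injection h with h; omega
    · have haocc : a ∈ occ := hmem
      have ha1 : 1 ≤ a := hoccb a haocc
      rcases hb : ((List.range k).map fun j => a - (j+1)).find?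
          (fun s => decide (1 ≤ s ∧ s ∉ occ)) with _ | s
      · rw [hb] at h
        rw [find?_map_range_none] at hb
        rw [find?_map_range_some] at h
        obtain ⟨t0, ht0l, hval, _, hmin⟩ := h
        -- a + (t0 + 1) = i, set j := i - a
        have haj : a + (t0 + 1) = i := hval
        set j := i - a with hj
        have hj1 : 1 ≤ j := by omega
        have hjl : j ≤ l := by omega
        -- j ≤ L
        have hjL : j ≤ L := by
          by_contra hc
          push_neg at hc
          rcases Nat.lt_or_ge (L + 1) j with hgt | heq
          · -- j > L + 1 : forward entry i - L - 1 would be free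
            have h1 : L < i - 1 := by omega
            have := hmin (j - L - 2) (by omega)
            simp only [decide_eq_false_iff_not, not_and, not_not] at this
            have hv : a + (j - L - 2 + 1) = i - L - 1 := by omega
            rw [hv] at this
            exact absurd (this (by omega)) (hL' h1)
          · -- j = L + 1 : a itself would be free
            have hje : j = L + 1 := by omega
            have h1 : L < i - 1 := by omega
            have : i - L - 1 = a := by omega
            exact absurd haocc (this ▸ hL' h1)
        have hLne : L ≠ 0 := by omega
        have hjF : j ≤ F := by
          rcases eq_or_ne L (i - 1) with hLe | hLne'
          · subst hF; rw [if_neg hLne, if_pos hLe]; omega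
          · have hLlt : L < i - 1 := by omega
            have hjk : j + k ≤ L := by
              by_contra hc
              push_neg at hc
              have := hb (L - j) (by omega)
              simp only [decide_eq_false_iff_not, not_and, not_not] at this
              have hv : a - (L - j + 1) = i - L - 1 := by omega
              rw [hv] at this
              exact absurd (this (by omega)) (hL' hLlt)
            subst hF; rw [if_neg hLne, if_neg hLne']; omega
        omega
      · rw [hb] at h
        injection h with h
        rw [h] at hb
        rw [find?_map_range_some] at hb
        obtain ⟨t0, ht0k, hval, _, hmin⟩ := hb
        have haj : a - (t0 + 1) = i := hval
        have hae : a = i + t0 + 1 := by omega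
        have hjR : t0 + 1 ≤ R := by
          by_contra hc
          push_neg at hc
          rcases Nat.lt_or_ge (R + 1) (t0 + 1) with hgt | heq
          · have := hmin (t0 - R - 1) (by omega)
            simp only [decide_eq_false_iff_not, not_and, not_not] at this
            have hv : a - (t0 - R - 1 + 1) = i + R + 1 := by omega
            rw [hv] at this
            exact absurd (this (by omega)) hR'
          · have hv : a = i + R + 1 := by omega
            rw [hv] at haocc
            exact absurd haocc hR'
        omega
  · rintro ⟨h1, h2⟩
    rcases lt_trichotomy a i with hai | rfl | hai
    · -- a < i
      set j := i - a with hj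
      have hj1 : 1 ≤ j := by omega
      have hjF : j ≤ F := by omega
      have hjL : j ≤ L := by omega
      have hjl : j ≤ l := by rcases hFl with h | h <;> omega
      have haocc : a ∈ occ := by
        have := hL j hj1 hjL; rwa [show i - j = a by omega] at this
      have ha1 : 1 ≤ a := hoccb a haocc
      have hLne : L ≠ 0 := by omega
      have hbn : ((List.range k).map fun j => a - (j+1)).find?
          (fun s => decide (1 ≤ s ∧ s ∉ occ)) = none := by
        rw [find?_map_range_none]
        intro t ht
        simp only [decide_eq_false_iff_not, not_and, not_not]
        intro he1
        rcases eq_or_ne L (i - 1) with hLe | hLne'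
        · have := hL (i - (a - (t+1))) (by omega) (by omega)
          rwa [show i - (i - (a - (t+1))) = a - (t+1) by omega] at this
        · have hLlt : L < i - 1 := by omega
          have hjk : j + k ≤ L := by
            have : F = min (L - k) l := by subst hF; rw [if_neg hLne, if_neg hLne']
            omega
          have := hL (j + t + 1) (by omega) (by omega)
          rwa [show i - (j + t + 1) = a - (t+1) by omega] at this
      have hfw : ((List.range l).map fun j => a + (j+1)).find?
          (fun s => decide (s ≤ n ∧ s ∉ occ)) = some i := by
        rw [find?_map_range_some]
        refine ⟨j - 1, by omega, by omega, by simp [hin, hio], ?_⟩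
        intro t ht
        simp only [decide_eq_false_iff_not, not_and, not_not]
        intro _
        have := hL (j - t - 1) (by omega) (by omega)
        rwa [show i - (j - t - 1) = a + (t+1) by omega] at this
      rw [pullTry, if_neg (not_not.mpr haocc), hbn]
      exact hfw
    · rw [pullTry, if_pos hio]
    · -- a > i
      set j := a - i with hj
      have hj1 : 1 ≤ j := by omega
      have hjR : j ≤ R := by omega
      have hjk : j ≤ k := by omega
      have haocc : a ∈ occ := by
        have := hR j hj1 hjR; rwa [show i + j = a by omega] at this
      have hbs : ((List.range k).map fun j => a - (j+1)).find?
          (fun s => decide (1 ≤ s ∧ s ∉ occ)) = some i := by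
        rw [find?_map_range_some]
        refine ⟨j - 1, by omega, by omega, by simp [hi1, hio], ?_⟩
        intro t ht
        simp only [decide_eq_false_iff_not, not_and, not_not]
        intro _
        have := hR (j - t - 1) (by omega) (by omega)
        rwa [show i + (j - t - 1) = a - (t+1) by omega] at this
      rw [pullTry, if_neg (not_not.mpr haocc), hbs]

lemma at1_zero {n : ℕ} (π : Fin n → ℕ) (t : ℕ) (h : ¬ (1 ≤ t ∧ t ≤ n)) :
    at1 π t = 0 := by rw [at1, dif_neg h]

lemma at1_eval {n : ℕ} (π : Fin n → ℕ) (t : ℕ) (h1 : 1 ≤ t) (h2 : t ≤ n) :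
    at1 π t = π ⟨t - 1, by omega⟩ := by rw [at1, dif_pos ⟨h1, h2⟩]

lemma at1_pos_bounds {n : ℕ} (π : Fin n → ℕ) (t : ℕ) (h : 0 < at1 π t) :
    1 ≤ t ∧ t ≤ n := by
  by_contra hc
  rw [at1_zero π t hc] at h
  omega

lemma occBefore_mem {n : ℕ} (π : Fin n → ℕ) (c s : ℕ) :
    s ∈ occBefore π c ↔ 0 < at1 π s ∧ at1 π s < c := by
  rw [occBefore, Finset.mem_filter, Finset.mem_Icc]
  constructor
  · rintro ⟨_, h⟩; exact h
  · intro h; exact ⟨at1_pos_bounds π s h.1, h⟩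

lemma pullTry_some_facts {k l n : ℕ} {occ : Finset ℕ} {a s : ℕ}
    (h : pullTry k l n occ a = some s) (ha1 : 1 ≤ a) (han : a ≤ n) :
    1 ≤ s ∧ s ≤ n ∧ s ∉ occ := by
  rw [pullTry] at h
  split_ifs at h with hmem
  swap
  · injection h with h; subst h; exact ⟨ha1, han, hmem⟩
  · rcases hb : ((List.range k).map fun j => a - (j+1)).find?
        (fun s => decide (1 ≤ s ∧ s ∉ occ)) with _ | s'
    · rw [hb] at h
      rw [find?_map_range_some] at h
      obtain ⟨j, hj, hval, hq, -⟩ := h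
      simp only [decide_eq_true_eq] at hq
      exact ⟨by omega, hq.1, hq.2⟩
    · rw [hb] at h
      injection h with h
      rw [h] at hb
      rw [find?_map_range_some] at hb
      obtain ⟨j, hj, hval, hq, -⟩ := hb
      simp only [decide_eq_true_eq] at hq
      exact ⟨hq.1, by omega, hq.2⟩


lemma pullRunAux_steps {k l n : ℕ} :
    ∀ (r : List ℕ) (occ : Finset ℕ) (t : List ℕ),
      pullRunAux k l n r occ = some t →
      t.length = r.length ∧
        ∀ j (hj : j < r.length) (hj' : j < t.length),
          pullTry k l n (occ ∪ (t.take j).toFinset) (r.get ⟨j, hj⟩)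
            = some (t.get ⟨j, hj'⟩) := by
  intro r
  induction r with
  | nil =>
    intro occ t h
    simp only [pullRunAux] at h
    injection h with h; subst h
    exact ⟨rfl, by intro j hj; simp at hj⟩
  | cons a rest ih =>
    intro occ t h
    simp only [pullRunAux] at h
    rcases hs : pullTry k l n occ a with _ | s <;> rw [hs] at h
    · exact absurd h (by simp)
    · rw [Option.map_eq_some_iff] at h
      obtain ⟨t', ht', rfl⟩ := h
      obtain ⟨hlen, hstep⟩ := ih (insert s occ) t' ht'
      refine ⟨by simp [hlen], ?_⟩
      intro j hj hj'
      cases j with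
      | zero => simpa using hs
      | succ j =>
        have := hstep j (by simpa using hj) (by simpa using hj')
        simp only [List.take_succ_cons, List.toFinset_cons, List.get_cons_succ]
        rw [Finset.union_insert]
        rwa [Finset.insert_union] at this

lemma pullRunAux_bounds {k l n : ℕ} :
    ∀ (r : List ℕ) (occ : Finset ℕ) (t : List ℕ),
      pullRunAux k l n r occ = some t →
      (∀ a ∈ r, 1 ≤ a ∧ a ≤ n) →
      ∀ s ∈ t, 1 ≤ s ∧ s ≤ n ∧ s ∉ occ := by
  intro r
  induction r with
  | nil =>
    intro occ t h _
    simp only [pullRunAux] at h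
    injection h with h; subst h
    simp
  | cons a rest ih =>
    intro occ t h hr
    simp only [pullRunAux] at h
    rcases hs : pullTry k l n occ a with _ | s <;> rw [hs] at h
    · exact absurd h (by simp)
    · rw [Option.map_eq_some_iff] at h
      obtain ⟨t', ht', rfl⟩ := h
      have hsf := pullTry_some_facts hs (hr a (by simp)).1 (hr a (by simp)).2
      intro x hx
      rcases List.mem_cons.mp hx with rfl | hx'
      · exact hsf
      · have := ih (insert s occ) t' ht' (fun b hb => hr b (by simp [hb])) x hx'
        refine ⟨this.1, this.2.1, fun hc => this.2.2 (Finset.mem_insert_of_mem hc)⟩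

lemma pullRunAux_nodup {k l n : ℕ} :
    ∀ (r : List ℕ) (occ : Finset ℕ) (t : List ℕ),
      pullRunAux k l n r occ = some t →
      (∀ a ∈ r, 1 ≤ a ∧ a ≤ n) →
      t.Nodup := by
  intro r
  induction r with
  | nil =>
    intro occ t h _
    simp only [pullRunAux] at h
    injection h with h; subst h
    simp
  | cons a rest ih =>
    intro occ t h hr
    simp only [pullRunAux] at h
    rcases hs : pullTry k l n occ a with _ | s <;> rw [hs] at h
    · exact absurd h (by simp)
    · rw [Option.map_eq_some_iff] at h
      obtain ⟨t', ht', rfl⟩ := h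
      have hrest : ∀ b ∈ rest, 1 ≤ b ∧ b ≤ n := fun b hb => hr b (by simp [hb])
      refine List.nodup_cons.mpr ⟨?_, ih _ _ ht' hrest⟩
      intro hc
      have := pullRunAux_bounds rest (insert s occ) t' ht' hrest s hc
      exact this.2.2 (Finset.mem_insert_self s occ)

lemma findIdx?_beq_of_get {l : List ℕ} {i : ℕ} :
    ∀ (c : ℕ) (hc : c < l.length), l.get ⟨c, hc⟩ = i → l.Nodup →
      l.findIdx? (· == i) = some c := by
  induction l with
  | nil => intro c hc; simp at hc
  | cons a tl ih =>
    intro c hc hget hnd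
    rcases List.nodup_cons.mp hnd with ⟨hna, hnd'⟩
    cases c with
    | zero =>
      simp only [List.get] at hget
      subst hget
      simp [List.findIdx?_cons]
    | succ c =>
      simp only [List.get_cons_succ] at hget
      have hne : (a == i) = false := by
        have : i ∈ tl := hget ▸ List.get_mem tl _
        simp only [beq_eq_false_iff_ne, ne_eq]
        rintro rfl; exact hna this
      rw [List.findIdx?_cons, hne]
      simp only [Bool.false_eq_true, if_false]
      rw [ih c (by simpa using hc) hget hnd']
      rfl

lemma outcomeOf_get {l : List ℕ} {i : ℕ} (c : ℕ) (hc : c < l.length)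
    (hget : l.get ⟨c, hc⟩ = i) (hnd : l.Nodup) : outcomeOf l i = c + 1 := by
  rw [outcomeOf, findIdx?_beq_of_get c hc hget hnd]

lemma outcomeOf_not_mem {l : List ℕ} {i : ℕ} (h : i ∉ l) : outcomeOf l i = 0 := by
  rw [outcomeOf, List.findIdx?_eq_none_iff.mpr]
  intro x hx
  simp only [beq_eq_false_iff_ne, ne_eq]
  rintro rfl; exact h hx

lemma runAux_of_steps {k l n m : ℕ} {π : Fin n → ℕ} {posn : ℕ → ℕ}
    (hOB : ∀ c, 1 ≤ c → c ≤ m →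
      insert (posn c) (occBefore π c) = occBefore π (c + 1)) :
    ∀ (r : List ℕ) (c₀ : ℕ), c₀ + r.length ≤ m →
      (∀ j (hj : j < r.length),
        pullTry k l n (occBefore π (c₀ + j + 1)) (r.get ⟨j, hj⟩)
          = some (posn (c₀ + j + 1))) →
      pullRunAux k l n r (occBefore π (c₀ + 1))
        = some (List.ofFn fun j : Fin r.length => posn (c₀ + (j : ℕ) + 1)) := by
  intro r
  induction r with
  | nil => intro c₀ _ _; simp [pullRunAux]
  | cons a rest ih =>
    intro c₀ hlen hstep
    simp only [pullRunAux]
    have h0 := hstep 0 (by simp)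
    simp only [List.get] at h0
    rw [show c₀ + 0 + 1 = c₀ + 1 by omega] at h0
    rw [h0]
    show Option.map (fun t => posn (c₀ + 1) :: t)
        (pullRunAux k l n rest (insert (posn (c₀ + 1)) (occBefore π (c₀ + 1))))
      = some (List.ofFn fun j : Fin ((a :: rest).length) => posn (c₀ + (j : ℕ) + 1))
    rw [hOB (c₀ + 1) (by omega) (by simp at hlen; omega)]
    have := ih (c₀ + 1) (by simp at hlen ⊢; omega)
      (fun j hj => by
        have := hstep (j + 1) (by simpa using Nat.succ_lt_succ hj)
        simp only [List.get_cons_succ] at this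
        rw [show c₀ + (j + 1) + 1 = c₀ + 1 + j + 1 by omega] at this
        exact this)
    rw [this]
    simp only [Option.map_some]
    congr 1
    rw [List.ofFn_succ]
    congr 1
    apply congrArg
    funext j
    congr 1
    simp only [Fin.val_succ]
    omega

lemma myFG_spec {P : ℕ → Prop} [DecidablePred P] {n : ℕ} (h0 : P 0) :
    P (Nat.findGreatest P n) :=
  Nat.findGreatest_spec (Nat.zero_le n) h0

lemma myFG_not {P : ℕ → Prop} [DecidablePred P] {n : ℕ}
    (h : Nat.findGreatest P n + 1 ≤ n) : ¬ P (Nat.findGreatest P n + 1) :=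
  Nat.findGreatest_is_greatest (by omega) h

theorem stmt14 (k l m n : ℕ) (hm : m ≤ n) (π : Fin n → ℕ)
    (hπ : π ∈ SmnSet m n) :
    ((pullPFs k l m n).filter (fun α => pullOutcome k l n α = π)).card
      = ∏ i ∈ Finset.Icc 1 n, (Bval k π i + Fval k l π i + 1) := by
  classical
  rw [SmnSet, Finset.mem_filter] at hπ
  obtain ⟨himg, hcnt⟩ := hπ
  rw [Finset.mem_image] at himg
  obtain ⟨π', -, hπ'⟩ := himg
  have hvm : ∀ x : Fin n, π x ≤ m := by
    intro x
    rw [← hπ']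
    exact Nat.lt_succ_iff.mp (π' x).isLt
  have huniq : ∀ c : ℕ, 1 ≤ c → c ≤ m → ∃! x : Fin n, π x = c := by
    intro c h1 h2
    have hc1 : Multiset.count c (Finset.univ.val.map π) = 1 := by
      have hcm := Multiset.count_map_eq_count' (fun x : ℕ => x + 1)
        (Multiset.range m) (add_left_injective 1) (c - 1)
      rw [show c - 1 + 1 = c by omega] at hcm
      rw [hcnt, Multiset.count_add, Multiset.count_replicate, if_neg (by omega), hcm]
      rw [Multiset.count_eq_one_of_mem (Multiset.nodup_range m)
        (Multiset.mem_range.mpr (by omega))]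
    rw [Multiset.count_map] at hc1
    have hc2 : (Finset.univ.filter (fun x : Fin n => c = π x)).card = 1 := by
      rw [Finset.card, Finset.filter_val]
      exact hc1
    obtain ⟨x, hx⟩ := Finset.card_eq_one.mp hc2
    refine ⟨x, ?_, ?_⟩
    · have : x ∈ Finset.univ.filter (fun x : Fin n => c = π x) := by
        rw [hx]; exact Finset.mem_singleton_self x
      rw [Finset.mem_filter] at this
      exact this.2.symm
    · intro y hy
      have : y ∈ Finset.univ.filter (fun x : Fin n => c = π x) := by
        rw [Finset.mem_filter]; exact ⟨Finset.mem_univ y, hy.symm⟩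
      rw [hx, Finset.mem_singleton] at this
      exact this
  have hexists : ∀ c : ℕ, ∃ s : ℕ, 1 ≤ c → c ≤ m →
      1 ≤ s ∧ s ≤ n ∧ at1 π s = c ∧ ∀ s', at1 π s' = c → s' = s := by
    intro c
    by_cases hc : 1 ≤ c ∧ c ≤ m
    · obtain ⟨x, hx, hux⟩ := huniq c hc.1 hc.2
      have hxlt := x.isLt
      refine ⟨(x : ℕ) + 1, fun _ _ => ⟨by omega, by omega, ?_, ?_⟩⟩
      · rw [at1_eval π _ (by omega) (by omega)]
        have hx' : (⟨(x : ℕ) + 1 - 1, by omega⟩ : Fin n) = x := by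
          ext; simp
        rw [hx', hx]
      · intro s' hs'
        have hb := at1_pos_bounds π s' (by omega)
        rw [at1_eval π s' hb.1 hb.2] at hs'
        have heq := hux _ hs'
        have : s' - 1 = (x : ℕ) := congrArg Fin.val heq
        omega
    · exact ⟨0, fun h1 h2 => absurd ⟨h1, h2⟩ hc⟩
  choose posn hposn using hexists
  have hpos1 : ∀ c, 1 ≤ c → c ≤ m → 1 ≤ posn c := fun c h1 h2 => (hposn c h1 h2).1
  have hpos2 : ∀ c, 1 ≤ c → c ≤ m → posn c ≤ n := fun c h1 h2 => (hposn c h1 h2).2.1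
  have hposv : ∀ c, 1 ≤ c → c ≤ m → at1 π (posn c) = c :=
    fun c h1 h2 => (hposn c h1 h2).2.2.1
  have hposu : ∀ c, 1 ≤ c → c ≤ m → ∀ s', at1 π s' = c → s' = posn c :=
    fun c h1 h2 => (hposn c h1 h2).2.2.2
  have hOB1 : occBefore π 1 = ∅ := by
    ext s
    rw [occBefore_mem]
    simp only [Finset.notMem_empty, iff_false]
    omega
  have hOBsucc : ∀ c, 1 ≤ c → c ≤ m →
      insert (posn c) (occBefore π c) = occBefore π (c + 1) := by
    intro c h1 h2
    ext s
    rw [Finset.mem_insert, occBefore_mem, occBefore_mem]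
    constructor
    · rintro (rfl | h)
      · rw [hposv c h1 h2]; omega
      · omega
    · rintro ⟨ha, hb⟩
      rcases Nat.lt_or_ge (at1 π s) c with h | h
      · right; exact ⟨ha, h⟩
      · left; exact hposu c h1 h2 s (by omega)
  -- per-car characterization of pullTry, plus bounds
  have hTry : ∀ c, 1 ≤ c → c ≤ m →
      (∀ a : ℕ, (pullTry k l n (occBefore π c) a = some (posn c) ↔
          posn c - Fval k l π (posn c) ≤ a ∧ a ≤ posn c + Bval k π (posn c)))
        ∧ Fval k l π (posn c) + 1 ≤ posn c ∧ posn c + Bval k π (posn c) ≤ n := by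
    intro c h1 h2
    have hi1 : 1 ≤ posn c := hpos1 c h1 h2
    have hin : posn c ≤ n := hpos2 c h1 h2
    have hiv : at1 π (posn c) = c := hposv c h1 h2
    have hPR : ∀ t ∈ Finset.Icc (posn c + 1) (posn c + rightRun π (posn c)),
        0 < at1 π t ∧ at1 π t < at1 π (posn c) := by
      rw [rightRun]
      exact myFG_spec (P := fun x => ∀ t ∈ Finset.Icc (posn c + 1) (posn c + x), 0 < at1 π t ∧ at1 π t < at1 π (posn c)) (by intro t ht; rw [Finset.mem_Icc] at ht; omega)
    have hRn : rightRun π (posn c) ≤ n - posn c := by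
      by_contra hcon
      push_neg at hcon
      have := hPR (n + 1) (by rw [Finset.mem_Icc]; omega)
      rw [at1_zero π (n + 1) (by omega)] at this
      omega
    have hngR : ¬ (∀ t ∈ Finset.Icc (posn c + 1) (posn c + (rightRun π (posn c) + 1)),
        0 < at1 π t ∧ at1 π t < at1 π (posn c)) := by
      rw [rightRun]
      exact myFG_not (P := fun x => ∀ t ∈ Finset.Icc (posn c + 1) (posn c + x), 0 < at1 π t ∧ at1 π t < at1 π (posn c)) (by rw [← rightRun]; omega)
    have hR'' : posn c + rightRun π (posn c) + 1 ∉ occBefore π c := by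
      intro hmem
      rw [occBefore_mem] at hmem
      push_neg at hngR
      obtain ⟨t, ht, hnt⟩ := hngR
      rw [Finset.mem_Icc] at ht
      rcases Nat.lt_or_ge t (posn c + rightRun π (posn c) + 1) with h | h
      · have hp := hPR t (by rw [Finset.mem_Icc]; omega)
        have := hnt hp.1
        omega
      · have hte : t = posn c + rightRun π (posn c) + 1 := by omega
        subst hte
        rw [hiv] at hnt
        have := hnt hmem.1
        omega
    have hPL : ∀ t ∈ Finset.Icc (posn c - leftRun π (posn c)) (posn c - 1),
        0 < at1 π t ∧ at1 π t < at1 π (posn c) := by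
      rw [leftRun]
      exact myFG_spec (P := fun x => ∀ t ∈ Finset.Icc (posn c - x) (posn c - 1), 0 < at1 π t ∧ at1 π t < at1 π (posn c)) (by intro t ht; rw [Finset.mem_Icc] at ht; omega)
    have hLi : leftRun π (posn c) ≤ posn c - 1 := by
      by_contra hcon
      push_neg at hcon
      have := hPL 0 (by rw [Finset.mem_Icc]; omega)
      rw [at1_zero π 0 (by omega)] at this
      omega
    have hngL : ¬ (∀ t ∈ Finset.Icc (posn c - (leftRun π (posn c) + 1)) (posn c - 1),
        0 < at1 π t ∧ at1 π t < at1 π (posn c)) → True := fun _ => trivial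
    have hL'' : leftRun π (posn c) < posn c - 1 →
        posn c - leftRun π (posn c) - 1 ∉ occBefore π c := by
      intro hlt hmem
      rw [occBefore_mem] at hmem
      have hng : ¬ (∀ t ∈ Finset.Icc (posn c - (leftRun π (posn c) + 1)) (posn c - 1),
          0 < at1 π t ∧ at1 π t < at1 π (posn c)) := by
        rw [leftRun]
        exact myFG_not (P := fun x => ∀ t ∈ Finset.Icc (posn c - x) (posn c - 1), 0 < at1 π t ∧ at1 π t < at1 π (posn c)) (by rw [← leftRun]; omega)
      push_neg at hng
      obtain ⟨t, ht, hnt⟩ := hng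
      rw [Finset.mem_Icc] at ht
      rcases Nat.lt_or_ge t (posn c - leftRun π (posn c)) with h | h
      · have hte : t = posn c - leftRun π (posn c) - 1 := by omega
        subst hte
        rw [hiv] at hnt
        have := hnt hmem.1
        omega
      · have hp := hPL t (by rw [Finset.mem_Icc]; omega)
        have := hnt hp.1
        omega
    have hoccb : ∀ s ∈ occBefore π c, 1 ≤ s :=
      fun s hs => (at1_pos_bounds π s ((occBefore_mem π c s).mp hs).1).1
    have hio : posn c ∉ occBefore π c := by
      rw [occBefore_mem, hiv]; omega
    have hRocc : ∀ j, 1 ≤ j → j ≤ rightRun π (posn c) → posn c + j ∈ occBefore π c := by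
      intro j hj1 hj2
      rw [occBefore_mem]
      have := hPR (posn c + j) (by rw [Finset.mem_Icc]; omega)
      rw [hiv] at this
      exact this
    have hLocc : ∀ j, 1 ≤ j → j ≤ leftRun π (posn c) → posn c - j ∈ occBefore π c := by
      intro j hj1 hj2
      rw [occBefore_mem]
      have := hPL (posn c - j) (by rw [Finset.mem_Icc]; omega)
      rw [hiv] at this
      exact this
    have hFeq : Fval k l π (posn c) = if leftRun π (posn c) = 0 then 0
        else if leftRun π (posn c) = posn c - 1 then min (posn c - 1) l
        else min (leftRun π (posn c) - k) l := rfl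
    have hmain := pullTry_eq_some_iff k l n (occBefore π c) (posn c)
      (rightRun π (posn c)) (leftRun π (posn c)) (Fval k l π (posn c))
      hi1 hin hio hoccb hRocc hR'' hLocc hL'' hLi hFeq
    refine ⟨fun a => ?_, ?_, ?_⟩
    · rw [Bval]; exact hmain a
    · rw [hFeq]; split_ifs <;> omega
    · rw [Bval]; omega
  -- cardinality of the per-car choice sets
  have hn0 : ∀ c, 1 ≤ c → c ≤ m → 0 < n := fun c h1 h2 => by
    have := hpos1 c h1 h2; have := hpos2 c h1 h2; omega
  have hcard : ∀ c, 1 ≤ c → c ≤ m →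
      (Finset.univ.filter (fun v : Fin n =>
          pullTry k l n (occBefore π c) ((v : ℕ) + 1) = some (posn c))).card
        = Bval k π (posn c) + Fval k l π (posn c) + 1 := by
    intro c h1 h2
    obtain ⟨hiff, hF1, hB1⟩ := hTry c h1 h2
    have hnpos : 0 < n := hn0 c h1 h2
    have hcc : (Finset.univ.filter (fun v : Fin n =>
          pullTry k l n (occBefore π c) ((v : ℕ) + 1) = some (posn c))).card
        = (Finset.Icc (posn c - Fval k l π (posn c))
            (posn c + Bval k π (posn c))).card := by
      apply Finset.card_nbij' (fun v : Fin n => (v : ℕ) + 1)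
        (fun b => if h : b - 1 < n then (⟨b - 1, h⟩ : Fin n) else ⟨0, hnpos⟩)
      · intro v hv
        rw [Finset.mem_coe, Finset.mem_filter] at hv
        rw [Finset.mem_coe, Finset.mem_Icc]
        exact (hiff _).mp hv.2
      · intro b hb
        rw [Finset.mem_coe, Finset.mem_Icc] at hb
        have hblt : b - 1 < n := by omega
        dsimp only
        rw [dif_pos hblt, Finset.mem_coe, Finset.mem_filter]
        refine ⟨Finset.mem_univ _, (hiff _).mpr ?_⟩
        simp only
        omega
      · intro v hv
        have : (v : ℕ) + 1 - 1 < n := by simpa using v.isLt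
        dsimp only
        rw [dif_pos this]
        ext; simp
      · intro b hb
        rw [Finset.mem_coe, Finset.mem_Icc] at hb
        have hblt : b - 1 < n := by omega
        dsimp only
        rw [dif_pos hblt]
        simp only
        omega
    rw [hcc, Nat.card_Icc]
    omega
  -- factor is 1 at empty spots
  have hzero : ∀ i, 1 ≤ i → i ≤ n → at1 π i = 0 →
      Bval k π i + Fval k l π i + 1 = 1 := by
    intro i h1 h2 h0
    have hR0 : rightRun π i = 0 := by
      by_contra hc
      have hPR : ∀ t ∈ Finset.Icc (i + 1) (i + rightRun π i),
          0 < at1 π t ∧ at1 π t < at1 π i := by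
        rw [rightRun]
        exact myFG_spec (P := fun x => ∀ t ∈ Finset.Icc (i + 1) (i + x), 0 < at1 π t ∧ at1 π t < at1 π i) (by intro t ht; rw [Finset.mem_Icc] at ht; omega)
      have := hPR (i + 1) (by rw [Finset.mem_Icc]; omega)
      rw [h0] at this
      omega
    have hL0 : leftRun π i = 0 := by
      by_contra hc
      have hPL : ∀ t ∈ Finset.Icc (i - leftRun π i) (i - 1),
          0 < at1 π t ∧ at1 π t < at1 π i := by
        rw [leftRun]
        exact myFG_spec (P := fun x => ∀ t ∈ Finset.Icc (i - x) (i - 1), 0 < at1 π t ∧ at1 π t < at1 π i) (by intro t ht; rw [Finset.mem_Icc] at ht; omega)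
      have := hPL (i - 1) (by rw [Finset.mem_Icc]; omega)
      rw [h0] at this
      omega
    rw [Bval, Fval, hR0, hL0]
    simp
  have hprefb : ∀ α : Fin m → Fin n, ∀ a ∈ prefList α, 1 ≤ a ∧ a ≤ n := by
    intro α a ha
    rw [prefList, List.mem_ofFn] at ha
    obtain ⟨x, rfl⟩ := ha
    show 1 ≤ (α x : ℕ) + 1 ∧ (α x : ℕ) + 1 ≤ n
    exact ⟨by omega, by have := (α x).isLt; omega⟩
  have hlenpref : ∀ α : Fin m → Fin n, (prefList α).length = m := by
    intro α; rw [prefList, List.length_ofFn]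
  have hget_pref : ∀ (α : Fin m → Fin n) (j : ℕ) (hj : j < (prefList α).length),
      (prefList α).get ⟨j, hj⟩
        = (α ⟨j, by rw [hlenpref α] at hj; exact hj⟩ : ℕ) + 1 := by
    intro α j hj
    simp only [prefList, List.get_ofFn]
    rfl
  have hset : (pullPFs k l m n).filter (fun α => pullOutcome k l n α = π)
      = Fintype.piFinset (fun j : Fin m => Finset.univ.filter (fun v : Fin n =>
          pullTry k l n (occBefore π ((j : ℕ) + 1)) ((v : ℕ) + 1)
            = some (posn ((j : ℕ) + 1)))) := by
    ext α
    rw [Finset.mem_filter, Fintype.mem_piFinset, pullPFs, Finset.mem_filter]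
    simp only [Finset.mem_univ, true_and]
    constructor
    · rintro ⟨hsome, hout⟩
      rw [Option.isSome_iff_exists] at hsome
      obtain ⟨spots, hsp⟩ := hsome
      rw [pullRun] at hsp
      obtain ⟨hlen, hstep⟩ := pullRunAux_steps _ _ _ hsp
      have hlenm : spots.length = m := by rw [hlen, hlenpref]
      have hnd := pullRunAux_nodup _ _ _ hsp (hprefb α)
      have hbnd := pullRunAux_bounds _ _ _ hsp (hprefb α)
      have hgetpos : ∀ (c : ℕ) (hc : c < spots.length),
          spots.get ⟨c, hc⟩ = posn (c + 1) := by
        intro c hc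
        have hb := hbnd _ (List.get_mem spots ⟨c, hc⟩)
        have hout' := congrFun hout (⟨spots.get ⟨c, hc⟩ - 1, by omega⟩ : Fin n)
        simp only [pullOutcome] at hout'
        rw [pullRun, hsp] at hout'
        simp only [Option.getD_some, Fin.val_mk] at hout'
        rw [show spots.get ⟨c, hc⟩ - 1 + 1 = spots.get ⟨c, hc⟩ by omega] at hout'
        rw [outcomeOf_get c hc rfl hnd] at hout'
        apply hposu (c + 1) (by omega) (by omega)
        rw [at1_eval π _ hb.1 hb.2.1]
        exact hout'.symm
      intro j
      rw [Finset.mem_filter]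
      refine ⟨Finset.mem_univ _, ?_⟩
      have hjlen : (j : ℕ) < (prefList α).length := by
        rw [hlenpref]; exact j.isLt
      have hjlen' : (j : ℕ) < spots.length := by rw [hlenm]; exact j.isLt
      have hs := hstep (j : ℕ) hjlen hjlen'
      rw [hget_pref α j hjlen] at hs
      rw [hgetpos _ hjlen'] at hs
      have hocc : (∅ : Finset ℕ) ∪ (spots.take (j : ℕ)).toFinset
          = occBefore π ((j : ℕ) + 1) := by
        rw [Finset.empty_union]
        ext s
        rw [List.mem_toFinset, occBefore_mem]
        constructor
        · intro hmem
          rw [List.mem_iff_get] at hmem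
          obtain ⟨⟨c, hclt⟩, hgc⟩ := hmem
          have hcltj : c < (j : ℕ) ∧ c < spots.length := by
            rw [List.length_take] at hclt; omega
          have hgtake : (spots.take (j : ℕ)).get ⟨c, hclt⟩
              = spots.get ⟨c, hcltj.2⟩ := by
            simp [List.get_eq_getElem, List.getElem_take]
          rw [hgtake, hgetpos c hcltj.2] at hgc
          rw [← hgc, hposv (c + 1) (by omega) (by omega)]
          omega
        · rintro ⟨hpos0, hlt⟩
          have hbs := at1_pos_bounds π s hpos0
          have hcm : at1 π s ≤ m := by
            rw [at1_eval π s hbs.1 hbs.2]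
            exact hvm _
          have hse : s = posn (at1 π s) := hposu (at1 π s) (by omega) hcm s rfl
          rw [List.mem_iff_get]
          have hc1lt : at1 π s - 1 < (spots.take (j : ℕ)).length := by
            rw [List.length_take]; omega
          refine ⟨⟨at1 π s - 1, hc1lt⟩, ?_⟩
          have hclt' : at1 π s - 1 < spots.length := by omega
          have hgtake : (spots.take (j : ℕ)).get ⟨at1 π s - 1, hc1lt⟩
              = spots.get ⟨at1 π s - 1, hclt'⟩ := by
            simp [List.get_eq_getElem, List.getElem_take]
          rw [hgtake, hgetpos _ hclt']
          rw [show at1 π s - 1 + 1 = at1 π s by omega]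
          exact hse.symm
      rw [hocc] at hs
      exact hs
    · intro hall
      have hstepcond : ∀ (j : ℕ) (hj : j < (prefList α).length),
          pullTry k l n (occBefore π (0 + j + 1)) ((prefList α).get ⟨j, hj⟩)
            = some (posn (0 + j + 1)) := by
        intro j hj
        have hj' : j < m := by rw [hlenpref] at hj; exact hj
        rw [hget_pref α j hj]
        have hmem := hall ⟨j, hj'⟩
        rw [Finset.mem_filter] at hmem
        rw [show 0 + j + 1 = j + 1 by omega]
        exact hmem.2
      have hrun : pullRun k l n (prefList α)
          = some (List.ofFn fun j : Fin (prefList α).length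
              => posn (0 + (j : ℕ) + 1)) := by
        rw [pullRun, ← hOB1]
        exact runAux_of_steps hOBsucc (prefList α) 0
          (by rw [hlenpref]; omega) hstepcond
      have hat : ∀ x : Fin n, at1 π ((x : ℕ) + 1) = π x := by
        intro x
        rw [at1_eval π _ (by omega) (by have := x.isLt; omega)]
        apply congrArg
        apply Fin.ext
        simp
      refine ⟨by rw [hrun]; rfl, ?_⟩
      funext x
      simp only [pullOutcome]
      rw [hrun]
      simp only [Option.getD_some]
      by_cases hx : 0 < π x
      · have hxm := hvm x
        have hidx : π x - 1 < (List.ofFn fun j : Fin (prefList α).length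
            => posn (0 + (j : ℕ) + 1)).length := by
          rw [List.length_ofFn, hlenpref]; omega
        have hnd2 : (List.ofFn fun j : Fin (prefList α).length
            => posn (0 + (j : ℕ) + 1)).Nodup := by
          rw [List.nodup_ofFn]
          intro a b hab
          have hL := hlenpref α
          have hla : (a : ℕ) < m := by have := a.isLt; omega
          have hlb : (b : ℕ) < m := by have := b.isLt; omega
          have hv1 := hposv ((a : ℕ) + 1) (by omega) (by omega)
          have hv2 := hposv ((b : ℕ) + 1) (by omega) (by omega)
          simp only [Nat.zero_add] at hab
          rw [hab, hv2] at hv1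
          apply Fin.ext
          omega
        have hgeteq : (List.ofFn fun j : Fin (prefList α).length
            => posn (0 + (j : ℕ) + 1)).get ⟨π x - 1, hidx⟩ = (x : ℕ) + 1 := by
          rw [List.get_ofFn]
          show posn (0 + (π x - 1) + 1) = (x : ℕ) + 1
          rw [show 0 + (π x - 1) + 1 = π x by omega]
          exact (hposu (π x) hx hxm ((x : ℕ) + 1) (hat x)).symm
        rw [outcomeOf_get (π x - 1) hidx hgeteq hnd2]
        omega
      · have hnm : ((x : ℕ) + 1) ∉ (List.ofFn fun j : Fin (prefList α).length
            => posn (0 + (j : ℕ) + 1)) := by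
          rw [List.mem_ofFn]
          rintro ⟨j, hj⟩
          have hL := hlenpref α
          have hlj : (j : ℕ) < m := by have := j.isLt; omega
          have hv1 := hposv ((j : ℕ) + 1) (by omega) (by omega)
          simp only [Nat.zero_add] at hj
          rw [hj, hat x] at hv1
          omega
        rw [outcomeOf_not_mem hnm]
        omega
  rw [hset, Fintype.card_piFinset]
  have hprod1 : ∀ j : Fin m,
      (Finset.univ.filter (fun v : Fin n =>
          pullTry k l n (occBefore π ((j : ℕ) + 1)) ((v : ℕ) + 1)
            = some (posn ((j : ℕ) + 1)))).card
        = Bval k π (posn ((j : ℕ) + 1)) + Fval k l π (posn ((j : ℕ) + 1)) + 1 :=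
    fun j => hcard ((j : ℕ) + 1) (by omega) (by have := j.isLt; omega)
  rw [Finset.prod_congr rfl (fun j _ => hprod1 j)]
  rw [Fin.prod_univ_eq_prod_range
    (fun j => Bval k π (posn (j + 1)) + Fval k l π (posn (j + 1)) + 1) m]
  have hsub : ∏ i ∈ Finset.Icc 1 n, (Bval k π i + Fval k l π i + 1)
      = ∏ i ∈ (Finset.Icc 1 n).filter (fun i => 0 < at1 π i),
          (Bval k π i + Fval k l π i + 1) := by
    symm
    apply Finset.prod_subset (Finset.filter_subset _ _)
    intro i hi hni
    have hi' := Finset.mem_Icc.mp hi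
    have h0 : at1 π i = 0 := by
      by_contra hc
      exact hni (Finset.mem_filter.mpr ⟨hi, by omega⟩)
    exact hzero i hi'.1 hi'.2 h0
  rw [hsub]
  apply Finset.prod_nbij' (fun c => posn (c + 1)) (fun i => at1 π i - 1)
  · intro c hc
    rw [Finset.mem_range] at hc
    rw [Finset.mem_filter, Finset.mem_Icc]
    have h1 := hpos1 (c + 1) (by omega) (by omega)
    have h2 := hpos2 (c + 1) (by omega) (by omega)
    have h3 := hposv (c + 1) (by omega) (by omega)
    exact ⟨⟨by omega, by omega⟩, by omega⟩
  · intro i hi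
    rw [Finset.mem_filter, Finset.mem_Icc] at hi
    rw [Finset.mem_range]
    have : at1 π i ≤ m := by
      rw [at1_eval π i hi.1.1 hi.1.2]; exact hvm _
    omega
  · intro c hc
    rw [Finset.mem_range] at hc
    rw [hposv (c + 1) (by omega) (by omega)]
    omega
  · intro i hi
    rw [Finset.mem_filter, Finset.mem_Icc] at hi
    have hm' : at1 π i ≤ m := by
      rw [at1_eval π i hi.1.1 hi.1.2]; exact hvm _
    rw [show at1 π i - 1 + 1 = at1 π i by omega]
    exact (hposu (at1 π i) (by omega) hm' i rfl).symm
  · intro c hc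
    rfl
end
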